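/- (One-step improvement of measured continuous greedy with approximate values.) Let f : 2^{[n]} → ℝ be a non-negative submodular function with multilinear extension F, let f_max ≥ max_{S ⊆ [n]} f(S), let O ⊆ [n], let ε ≥ 0, and let f̂ : 2^{[n]} → ℝ with multilinear extension F̂ satisfy |f̂(S) − f(S)| ≤ ε for all S ⊆ [n]. Write ∂_i G(x) = G(x ∨ 1_i) − G(x ∧ 1_{ī}) for G ∈ {F, F̂}. Let δ ∈ (0,1), let x ∈ [0,1]^n, and let y ∈ [0,1]^n satisfy Σ_{i=1}^n ∂_i F̂(x) · (1 − x_i) · y_i ≥ Σ_{i ∈ O} ∂_i F̂(x) · (1 − x_i). Define x' ∈ [0,1]^n by x'_i = x_i + δ(1 − x_i)y_i. Then F(x') − F(x) ≥ δ · ( F(x ∨ 1_O) − F(x) ) − 4nδε − n³δ²·f_max. -/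

import Mathlib

open Finset

/-- A set function on a finite ground set is submodular. -/
def Submodular {α : Type*} [DecidableEq α] (f : Finset α → ℝ) : Prop :=
  ∀ A B : Finset α, f A + f B ≥ f (A ∪ B) + f (A ∩ B)

/-- The multilinear extension of a set function `f : 2^[n] → ℝ`. -/
noncomputable def mlext (n : ℕ) (f : Finset (Fin n) → ℝ) (x : Fin n → ℝ) : ℝ :=
  ∑ S : Finset (Fin n), f S * ((∏ i ∈ S, x i) * ∏ i ∈ Sᶜ, (1 - x i))

/-- The partial derivative of the multilinear extension in coordinate `i`. -/
noncomputable def mlextDeriv (n : ℕ) (f : Finset (Fin n) → ℝ) (x : Fin n → ℝ) (i : Fin n) : ℝ :=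
  mlext n f (Function.update x i 1) - mlext n f (Function.update x i 0)

lemma weight_nonneg {n : ℕ} {x : Fin n → ℝ} (hx : ∀ i, x i ∈ Set.Icc (0:ℝ) 1)
    (S : Finset (Fin n)) : 0 ≤ (∏ i ∈ S, x i) * ∏ i ∈ Sᶜ, (1 - x i) :=
  mul_nonneg (Finset.prod_nonneg fun i _ => (hx i).1)
    (Finset.prod_nonneg fun i _ => by linarith [(hx i).2])

lemma weight_sum_one {n : ℕ} (x : Fin n → ℝ) :
    ∑ S : Finset (Fin n), (∏ i ∈ S, x i) * ∏ i ∈ Sᶜ, (1 - x i) = 1 := by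
  have h2 : ∑ S ∈ (univ : Finset (Fin n)).powerset,
      (∏ i ∈ S, x i) * ∏ i ∈ univ \ S, (1 - x i) = 1 := by
    rw [← Finset.prod_add]; simp
  rw [← Finset.powerset_univ]
  refine Eq.trans ?_ h2
  exact Finset.sum_congr rfl fun S _ => by rw [Finset.compl_eq_univ_sdiff]

lemma mlext_le {n : ℕ} {f : Finset (Fin n) → ℝ} {b : ℝ} (hb : ∀ S, f S ≤ b)
    {x : Fin n → ℝ} (hx : ∀ i, x i ∈ Set.Icc (0:ℝ) 1) : mlext n f x ≤ b := by
  unfold mlext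
  calc ∑ S : Finset (Fin n), f S * ((∏ i ∈ S, x i) * ∏ i ∈ Sᶜ, (1 - x i))
      ≤ ∑ S : Finset (Fin n), b * ((∏ i ∈ S, x i) * ∏ i ∈ Sᶜ, (1 - x i)) :=
        Finset.sum_le_sum fun S _ => mul_le_mul_of_nonneg_right (hb S) (weight_nonneg hx S)
    _ = b := by rw [← Finset.mul_sum, weight_sum_one, mul_one]

lemma le_mlext {n : ℕ} {f : Finset (Fin n) → ℝ} {a : ℝ} (ha : ∀ S, a ≤ f S)
    {x : Fin n → ℝ} (hx : ∀ i, x i ∈ Set.Icc (0:ℝ) 1) : a ≤ mlext n f x := by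
  unfold mlext
  calc a = ∑ S : Finset (Fin n), a * ((∏ i ∈ S, x i) * ∏ i ∈ Sᶜ, (1 - x i)) := by
        rw [← Finset.mul_sum, weight_sum_one, mul_one]
    _ ≤ _ := Finset.sum_le_sum fun S _ => mul_le_mul_of_nonneg_right (ha S) (weight_nonneg hx S)

lemma mlext_sub {n : ℕ} (f g : Finset (Fin n) → ℝ) (x : Fin n → ℝ) :
    mlext n (fun S => f S - g S) x = mlext n f x - mlext n g x := by
  unfold mlext
  rw [← Finset.sum_sub_distrib]
  exact Finset.sum_congr rfl fun S _ => by ring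
lemma weight_update_mem {n : ℕ} (x : Fin n → ℝ) (k : Fin n) (t : ℝ) {S : Finset (Fin n)}
    (hk : k ∈ S) :
    (∏ i ∈ S, Function.update x k t i) * ∏ i ∈ Sᶜ, (1 - Function.update x k t i) =
      t * ((∏ i ∈ S.erase k, x i) * ∏ i ∈ Sᶜ, (1 - x i)) := by
  rw [Finset.prod_update_of_mem hk, ← Finset.erase_eq]
  have h2 : ∏ i ∈ Sᶜ, (1 - Function.update x k t i) = ∏ i ∈ Sᶜ, (1 - x i) :=
    Finset.prod_congr rfl fun i hi => by
      rw [Function.update_of_ne (by rintro rfl; exact (Finset.mem_compl.mp hi) hk)]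
  rw [h2]; ring

lemma weight_update_not_mem {n : ℕ} (x : Fin n → ℝ) (k : Fin n) (t : ℝ) {S : Finset (Fin n)}
    (hk : k ∉ S) :
    (∏ i ∈ S, Function.update x k t i) * ∏ i ∈ Sᶜ, (1 - Function.update x k t i) =
      (1 - t) * ((∏ i ∈ S, x i) * ∏ i ∈ Sᶜ.erase k, (1 - x i)) := by
  have hkc : k ∈ Sᶜ := Finset.mem_compl.mpr hk
  have h1 : ∏ i ∈ S, Function.update x k t i = ∏ i ∈ S, x i :=
    Finset.prod_congr rfl fun i hi => Function.update_of_ne (by rintro rfl; exact hk hi) _ _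
  have h2 : ∏ i ∈ Sᶜ, (1 - Function.update x k t i) =
      (1 - t) * ∏ i ∈ Sᶜ.erase k, (1 - x i) := by
    rw [← Finset.mul_prod_erase _ _ hkc, Function.update_self]
    congr 1
    exact Finset.prod_congr rfl fun i hi => by
      rw [Function.update_of_ne (Finset.ne_of_mem_erase hi)]
  rw [h1, h2]; ring

lemma mlext_update {n : ℕ} (f : Finset (Fin n) → ℝ) (x : Fin n → ℝ) (k : Fin n) (t : ℝ) :
    mlext n f (Function.update x k t) = mlext n f x + (t - x k) * mlextDeriv n f x k := by
  have key : ∀ s : ℝ, mlext n f (Function.update x k s) =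
      mlext n f x + (s - x k) * ((∑ S : Finset (Fin n), if k ∈ S then
          f S * ((∏ i ∈ S.erase k, x i) * ∏ i ∈ Sᶜ, (1 - x i)) else
          -(f S * ((∏ i ∈ S, x i) * ∏ i ∈ Sᶜ.erase k, (1 - x i))))) := by
    intro s
    have hx : mlext n f x = mlext n f (Function.update x k (x k)) := by
      rw [Function.update_eq_self]
    rw [hx]
    unfold mlext
    rw [Finset.mul_sum, ← Finset.sum_add_distrib]
    apply Finset.sum_congr rfl
    intro S _
    by_cases hk : k ∈ S
    · rw [weight_update_mem x k s hk, weight_update_mem x k (x k) hk, if_pos hk]; ring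
    · rw [weight_update_not_mem x k s hk, weight_update_not_mem x k (x k) hk, if_neg hk]; ring
  have h1 := key 1
  have h0 := key 0
  have ht := key t
  unfold mlextDeriv
  rw [h1, h0, ht]; ring
lemma sum_pair {n : ℕ} (k : Fin n) (g : Finset (Fin n) → ℝ) :
    ∑ S : Finset (Fin n), g S =
      ∑ T ∈ ((univ : Finset (Fin n)).erase k).powerset, (g T + g (insert k T)) := by
  rw [← Finset.powerset_univ]
  calc ∑ S ∈ (univ : Finset (Fin n)).powerset, g S
      = ∑ S ∈ (insert k ((univ : Finset (Fin n)).erase k)).powerset, g S := by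
        rw [Finset.insert_erase (Finset.mem_univ k)]
    _ = (∑ T ∈ ((univ : Finset (Fin n)).erase k).powerset, g T) +
        ∑ T ∈ ((univ : Finset (Fin n)).erase k).powerset, g (insert k T) :=
        Finset.sum_powerset_insert (Finset.notMem_erase k univ) g
    _ = _ := Finset.sum_add_distrib.symm

lemma not_mem_of_mem_powerset_erase {n : ℕ} {k : Fin n} {T : Finset (Fin n)}
    (hT : T ∈ ((univ : Finset (Fin n)).erase k).powerset) : k ∉ T :=
  fun h => Finset.notMem_erase k univ (Finset.mem_powerset.mp hT h)

lemma mlext_update_one {n : ℕ} (f : Finset (Fin n) → ℝ) (x : Fin n → ℝ) (k : Fin n) :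
    mlext n f (Function.update x k 1) = mlext n (fun S => f (insert k S)) x := by
  unfold mlext
  rw [sum_pair k, sum_pair k]
  apply Finset.sum_congr rfl
  intro T hT
  have hk : k ∉ T := not_mem_of_mem_powerset_erase hT
  have hkT : k ∈ insert k T := Finset.mem_insert_self k T
  simp only [weight_update_not_mem x k 1 hk, weight_update_mem x k 1 hkT,
    Finset.erase_insert hk, Finset.insert_idem]
  rw [← Finset.mul_prod_erase Tᶜ (fun i => 1 - x i) (Finset.mem_compl.mpr hk),
    Finset.prod_insert hk]
  simp only [Finset.compl_insert]
  ring

lemma mlext_update_zero {n : ℕ} (f : Finset (Fin n) → ℝ) (x : Fin n → ℝ) (k : Fin n) :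
    mlext n f (Function.update x k 0) = mlext n (fun S => f (S.erase k)) x := by
  unfold mlext
  rw [sum_pair k, sum_pair k]
  apply Finset.sum_congr rfl
  intro T hT
  have hk : k ∉ T := not_mem_of_mem_powerset_erase hT
  have hkT : k ∈ insert k T := Finset.mem_insert_self k T
  simp only [weight_update_not_mem x k 0 hk, weight_update_mem x k 0 hkT,
    Finset.erase_insert hk, Finset.erase_eq_of_notMem hk]
  rw [← Finset.mul_prod_erase Tᶜ (fun i => 1 - x i) (Finset.mem_compl.mpr hk),
    Finset.prod_insert hk]
  simp only [Finset.compl_insert]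
  ring

lemma mlextDeriv_eq {n : ℕ} (f : Finset (Fin n) → ℝ) (x : Fin n → ℝ) (k : Fin n) :
    mlextDeriv n f x k = mlext n (fun S => f (insert k S) - f (S.erase k)) x := by
  unfold mlextDeriv
  rw [mlext_update_one, mlext_update_zero, mlext_sub]

lemma abs_mlextDeriv_le {n : ℕ} {f : Finset (Fin n) → ℝ} {fmax : ℝ}
    (hf0 : ∀ S, 0 ≤ f S) (hfmax : ∀ S, f S ≤ fmax)
    {x : Fin n → ℝ} (hx : ∀ i, x i ∈ Set.Icc (0:ℝ) 1) (k : Fin n) :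
    |mlextDeriv n f x k| ≤ fmax := by
  rw [mlextDeriv_eq, abs_le]
  constructor
  · exact le_mlext (fun S => by linarith [hf0 (insert k S), hfmax (S.erase k)]) hx
  · exact mlext_le (fun S => by linarith [hf0 (S.erase k), hfmax (insert k S)]) hx
lemma update_mem_Icc {n : ℕ} {x : Fin n → ℝ} (hx : ∀ i, x i ∈ Set.Icc (0:ℝ) 1)
    {t : ℝ} (ht : t ∈ Set.Icc (0:ℝ) 1) (k : Fin n) :
    ∀ i, Function.update x k t i ∈ Set.Icc (0:ℝ) 1 := by
  intro i
  by_cases h : i = k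
  · subst h; rw [Function.update_self]; exact ht
  · rw [Function.update_of_ne h]; exact hx i

lemma mlextDeriv_update {n : ℕ} (f : Finset (Fin n) → ℝ) {j k : Fin n} (hjk : j ≠ k)
    (x : Fin n → ℝ) (t : ℝ) :
    mlextDeriv n f (Function.update x k t) j = mlextDeriv n f x j +
      (t - x k) * (mlextDeriv n f (Function.update x j 1) k -
        mlextDeriv n f (Function.update x j 0) k) := by
  have e1 : mlext n f (Function.update (Function.update x k t) j 1) =
      mlext n f (Function.update x j 1) +
        (t - x k) * mlextDeriv n f (Function.update x j 1) k := by
    rw [Function.update_comm (Ne.symm hjk), mlext_update,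
      Function.update_of_ne (Ne.symm hjk)]
  have e0 : mlext n f (Function.update (Function.update x k t) j 0) =
      mlext n f (Function.update x j 0) +
        (t - x k) * mlextDeriv n f (Function.update x j 0) k := by
    rw [Function.update_comm (Ne.symm hjk), mlext_update,
      Function.update_of_ne (Ne.symm hjk)]
  show mlext n f (Function.update (Function.update x k t) j 1) -
      mlext n f (Function.update (Function.update x k t) j 0) = _
  rw [e1, e0]
  show _ = (mlext n f (Function.update x j 1) - mlext n f (Function.update x j 0)) + _
  ring

lemma cross_nonpos {n : ℕ} {f : Finset (Fin n) → ℝ} (hf : Submodular f)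
    {j k : Fin n} (hjk : j ≠ k) {x : Fin n → ℝ} (hx : ∀ i, x i ∈ Set.Icc (0:ℝ) 1) :
    mlextDeriv n f (Function.update x j 1) k - mlextDeriv n f (Function.update x j 0) k ≤ 0 := by
  rw [mlextDeriv_eq, mlextDeriv_eq, mlext_update_one, mlext_update_zero, ← mlext_sub]
  apply mlext_le _ hx
  intro S
  have hsub := hf ((insert j S).erase k) ((insert k S).erase j)
  have hU : (insert j S).erase k ∪ (insert k S).erase j = insert k (insert j S) := by
    ext a
    by_cases h1 : a = j <;> by_cases h2 : a = k <;>
      simp [Finset.mem_union, Finset.mem_erase, Finset.mem_insert, h1, h2] <;>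
      first
        | tauto
        | (subst h1; subst h2; exact absurd rfl hjk)
        | (intro h; exact absurd (h1.symm.trans h2) hjk)
  have hI : (insert j S).erase k ∩ (insert k S).erase j = (S.erase j).erase k := by
    ext a
    by_cases h1 : a = j <;> by_cases h2 : a = k <;>
      simp [Finset.mem_inter, Finset.mem_erase, Finset.mem_insert, h1, h2] <;> tauto
  have hB : (insert k S).erase j = insert k (S.erase j) := by
    ext a
    by_cases h1 : a = j <;> by_cases h2 : a = k <;>
      simp [Finset.mem_erase, Finset.mem_insert, h1, h2] <;> tauto
  rw [hU, hI, hB] at hsub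
  linarith
lemma mlextDeriv_update_one_le {n : ℕ} {f : Finset (Fin n) → ℝ} (hf : Submodular f)
    {x : Fin n → ℝ} (hx : ∀ i, x i ∈ Set.Icc (0:ℝ) 1) (k j : Fin n) :
    mlextDeriv n f (Function.update x k 1) j ≤ mlextDeriv n f x j := by
  by_cases hjk : j = k
  · subst hjk
    unfold mlextDeriv
    rw [Function.update_idem, Function.update_idem]
  · rw [mlextDeriv_update f hjk x 1]
    have hc := cross_nonpos hf hjk hx
    have hk1 : 0 ≤ 1 - x k := by linarith [(hx k).2]
    nlinarith

lemma ite_mem_Icc {n : ℕ} {x : Fin n → ℝ} (hx : ∀ i, x i ∈ Set.Icc (0:ℝ) 1)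
    (O : Finset (Fin n)) : ∀ i, (if i ∈ O then (1:ℝ) else x i) ∈ Set.Icc (0:ℝ) 1 := by
  intro i
  by_cases h : i ∈ O
  · simp [h]
  · simp only [h, if_false]; exact hx i

lemma ite_insert_eq_update {n : ℕ} (x : Fin n → ℝ) (a : Fin n) (O : Finset (Fin n)) :
    (fun i => if i ∈ insert a O then (1:ℝ) else x i) =
      Function.update (fun i => if i ∈ O then (1:ℝ) else x i) a 1 := by
  funext i
  by_cases h : i = a
  · subst h; simp [Function.update_self]
  · rw [Function.update_of_ne h]
    simp [Finset.mem_insert, h]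

lemma mlextDeriv_ite_le {n : ℕ} {f : Finset (Fin n) → ℝ} (hf : Submodular f)
    {x : Fin n → ℝ} (hx : ∀ i, x i ∈ Set.Icc (0:ℝ) 1) (O : Finset (Fin n)) (j : Fin n) :
    mlextDeriv n f (fun i => if i ∈ O then 1 else x i) j ≤ mlextDeriv n f x j := by
  induction O using Finset.induction_on with
  | empty =>
      have : (fun i => if i ∈ (∅ : Finset (Fin n)) then (1:ℝ) else x i) = x := by
        funext i; simp
      rw [this]
  | @insert _ _ ha ih =>
      rw [ite_insert_eq_update]
      exact le_trans (mlextDeriv_update_one_le hf (ite_mem_Icc hx _) _ j) ih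

lemma grad_dominates {n : ℕ} {f : Finset (Fin n) → ℝ} (hf : Submodular f)
    {x : Fin n → ℝ} (hx : ∀ i, x i ∈ Set.Icc (0:ℝ) 1) (O : Finset (Fin n)) :
    mlext n f (fun j => if j ∈ O then 1 else x j) - mlext n f x ≤
      ∑ i ∈ O, (1 - x i) * mlextDeriv n f x i := by
  induction O using Finset.induction_on with
  | empty =>
      have : (fun i => if i ∈ (∅ : Finset (Fin n)) then (1:ℝ) else x i) = x := by
        funext i; simp
      rw [this]; simp
  | @insert a O' ha ih =>
      rw [ite_insert_eq_update, Finset.sum_insert ha, mlext_update]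
      have hza : (fun i => if i ∈ O' then (1:ℝ) else x i) a = x a := if_neg ha
      have hD : mlextDeriv n f (fun i => if i ∈ O' then (1:ℝ) else x i) a ≤
          mlextDeriv n f x a := mlextDeriv_ite_le hf hx O' a
      have h1 : (1 - x a) * mlextDeriv n f (fun i => if i ∈ O' then (1:ℝ) else x i) a ≤
          (1 - x a) * mlextDeriv n f x a :=
        mul_le_mul_of_nonneg_left hD (by linarith [(hx a).2])
      rw [if_neg ha]
      linarith
lemma hyb_mem_Icc {n : ℕ} {x x' : Fin n → ℝ} (hx : ∀ i, x i ∈ Set.Icc (0:ℝ) 1)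
    (hx' : ∀ i, x' i ∈ Set.Icc (0:ℝ) 1) (A : Finset (Fin n)) :
    ∀ i, (if i ∈ A then x' i else x i) ∈ Set.Icc (0:ℝ) 1 := by
  intro i; by_cases h : i ∈ A <;> simp [h, hx i, hx' i]

lemma hyb_insert_eq_update {n : ℕ} (x x' : Fin n → ℝ) {a : Fin n} {A : Finset (Fin n)}
    (ha : a ∉ A) :
    (fun i => if i ∈ insert a A then x' i else x i) =
      Function.update (fun i => if i ∈ A then x' i else x i) a (x' a) := by
  funext i
  by_cases h : i = a
  · subst h; simp [Function.update_self, ha]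
  · rw [Function.update_of_ne h]
    simp [Finset.mem_insert, h]

lemma deriv_hybrid_close {n : ℕ} {f : Finset (Fin n) → ℝ} {fmax : ℝ}
    (hf0 : ∀ S, 0 ≤ f S) (hfmax : ∀ S, f S ≤ fmax)
    {x x' : Fin n → ℝ} (hx : ∀ i, x i ∈ Set.Icc (0:ℝ) 1)
    (hx' : ∀ i, x' i ∈ Set.Icc (0:ℝ) 1) {δ : ℝ} (hδ : 0 ≤ δ)
    (hd : ∀ i, |x' i - x i| ≤ δ) (j : Fin n) (A : Finset (Fin n)) :
    |mlextDeriv n f (fun i => if i ∈ A then x' i else x i) j - mlextDeriv n f x j| ≤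
      2 * fmax * δ * (A.card : ℝ) := by
  induction A using Finset.induction_on with
  | empty =>
      have : (fun i => if i ∈ (∅ : Finset (Fin n)) then x' i else x i) = x := by
        funext i; simp
      rw [this]; simp
  | @insert k A hk ih =>
      have hpIcc := hyb_mem_Icc hx hx' A
      rw [hyb_insert_eq_update x x' hk]
      set p := fun i => if i ∈ A then x' i else x i with hp
      have hstep : |mlextDeriv n f (Function.update p k (x' k)) j - mlextDeriv n f p j| ≤
          2 * fmax * δ := by
        by_cases hjk : j = k
        · subst hjk
          have : mlextDeriv n f (Function.update p j (x' j)) j = mlextDeriv n f p j := by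
            unfold mlextDeriv
            rw [Function.update_idem, Function.update_idem]
          rw [this, sub_self, abs_zero]
          have hfm : (0:ℝ) ≤ fmax := le_trans (hf0 ∅) (hfmax ∅)
          have := mul_nonneg hfm hδ
          linarith
        · rw [mlextDeriv_update f hjk p (x' k)]
          have hpk : p k = x k := if_neg hk
          have h1 : |mlextDeriv n f (Function.update p j 1) k| ≤ fmax :=
            abs_mlextDeriv_le hf0 hfmax
              (update_mem_Icc hpIcc (Set.mem_Icc.mpr ⟨zero_le_one, le_refl 1⟩) j) k
          have h0 : |mlextDeriv n f (Function.update p j 0) k| ≤ fmax :=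
            abs_mlextDeriv_le hf0 hfmax
              (update_mem_Icc hpIcc (Set.mem_Icc.mpr ⟨le_refl 0, zero_le_one⟩) j) k
          have hdk : |x' k - p k| ≤ δ := by rw [hpk]; exact hd k
          have habs : |(x' k - p k) * (mlextDeriv n f (Function.update p j 1) k -
              mlextDeriv n f (Function.update p j 0) k)| ≤ δ * (2 * fmax) := by
            rw [abs_mul]
            have hcr : |mlextDeriv n f (Function.update p j 1) k -
                mlextDeriv n f (Function.update p j 0) k| ≤ 2 * fmax := by
              obtain ⟨a1, a2⟩ := abs_le.mp h1
              obtain ⟨b1, b2⟩ := abs_le.mp h0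
              exact abs_le.mpr ⟨by linarith, by linarith⟩
            exact mul_le_mul hdk hcr (abs_nonneg _) hδ
          calc |mlextDeriv n f p j + (x' k - p k) * _ - mlextDeriv n f p j| =
              |(x' k - p k) * (mlextDeriv n f (Function.update p j 1) k -
                mlextDeriv n f (Function.update p j 0) k)| := by ring_nf
            _ ≤ δ * (2 * fmax) := habs
            _ = 2 * fmax * δ := by ring
      have htr := abs_sub_le (mlextDeriv n f (Function.update p k (x' k)) j)
        (mlextDeriv n f p j) (mlextDeriv n f x j)
      rw [Finset.card_insert_of_notMem hk]
      push_cast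
      have := ih
      linarith
lemma hybrid_step {n : ℕ} {f : Finset (Fin n) → ℝ} {fmax : ℝ}
    (hf0 : ∀ S, 0 ≤ f S) (hfmax : ∀ S, f S ≤ fmax)
    {x x' : Fin n → ℝ} (hx : ∀ i, x i ∈ Set.Icc (0:ℝ) 1)
    (hx' : ∀ i, x' i ∈ Set.Icc (0:ℝ) 1) {δ : ℝ} (hδ : 0 ≤ δ)
    (hd : ∀ i, |x' i - x i| ≤ δ) (A : Finset (Fin n)) :
    mlext n f (fun i => if i ∈ A then x' i else x i) - mlext n f x ≥
      (∑ j ∈ A, (x' j - x j) * mlextDeriv n f x j) -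
        fmax * δ ^ 2 * (A.card : ℝ) * ((A.card : ℝ) - 1) := by
  induction A using Finset.induction_on with
  | empty =>
      have : (fun i => if i ∈ (∅ : Finset (Fin n)) then x' i else x i) = x := by
        funext i; simp
      rw [this]; simp
  | @insert k A hk ih =>
      rw [hyb_insert_eq_update x x' hk, Finset.sum_insert hk, mlext_update,
        Finset.card_insert_of_notMem hk]
      set p := fun i => if i ∈ A then x' i else x i with hp
      have hpk : p k = x k := if_neg hk
      have hclose := deriv_hybrid_close hf0 hfmax hx hx' hδ hd k A
      have hterm : (x' k - p k) * mlextDeriv n f p k ≥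
          (x' k - x k) * mlextDeriv n f x k - 2 * fmax * δ ^ 2 * (A.card : ℝ) := by
        rw [hpk]
        have hneg := neg_abs_le ((x' k - x k) *
          (mlextDeriv n f p k - mlextDeriv n f x k))
        rw [abs_mul] at hneg
        have hB : |x' k - x k| * |mlextDeriv n f p k - mlextDeriv n f x k| ≤
            δ * (2 * fmax * δ * (A.card : ℝ)) :=
          mul_le_mul (hd k) hclose (abs_nonneg _) hδ
        nlinarith [hneg, hB]
      push_cast
      have hih := ih
      have hE : fmax * δ ^ 2 * ((A.card : ℝ) + 1) * (((A.card : ℝ) + 1) - 1) =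
          fmax * δ ^ 2 * (A.card : ℝ) * ((A.card : ℝ) - 1) +
            2 * fmax * δ ^ 2 * (A.card : ℝ) := by ring
      have hgoal2 : (x' k - p k) * mlextDeriv n f p k =
          mlext n f (Function.update p k (x' k)) - mlext n f p := by
        rw [mlext_update]; ring
      linarith [hterm, hih]
theorem measured_continuous_greedy_step (n : ℕ) (f fh : Finset (Fin n) → ℝ)
    (hf0 : ∀ S : Finset (Fin n), 0 ≤ f S) (hf : Submodular f)
    (fmax : ℝ) (hfmax : ∀ S : Finset (Fin n), f S ≤ fmax)
    (O : Finset (Fin n)) (ε : ℝ) (hε : 0 ≤ ε)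
    (happrox : ∀ S : Finset (Fin n), |fh S - f S| ≤ ε)
    (δ : ℝ) (hδ0 : 0 < δ) (hδ1 : δ < 1)
    (x y : Fin n → ℝ) (hx : ∀ i, x i ∈ Set.Icc (0 : ℝ) 1) (hy : ∀ i, y i ∈ Set.Icc (0 : ℝ) 1)
    (hchoice : ∑ i : Fin n, mlextDeriv n fh x i * (1 - x i) * y i ≥
      ∑ i ∈ O, mlextDeriv n fh x i * (1 - x i)) :
    mlext n f (fun i => x i + δ * (1 - x i) * y i) - mlext n f x ≥
      δ * (mlext n f (fun j => if j ∈ O then 1 else x j) - mlext n f x) -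
        4 * (n : ℝ) * δ * ε - (n : ℝ) ^ 3 * δ ^ 2 * fmax := by
  have hfm : (0:ℝ) ≤ fmax := le_trans (hf0 ∅) (hfmax ∅)
  set x' : Fin n → ℝ := fun i => x i + δ * (1 - x i) * y i with hx'def
  have hyb01 : ∀ i, 0 ≤ (1 - x i) * y i ∧ (1 - x i) * y i ≤ 1 := by
    intro i
    obtain ⟨hx0, hx1⟩ := hx i; obtain ⟨hy0, hy1⟩ := hy i
    exact ⟨mul_nonneg (by linarith) hy0, by nlinarith⟩
  have hx' : ∀ i, x' i ∈ Set.Icc (0:ℝ) 1 := by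
    intro i
    obtain ⟨hx0, hx1⟩ := hx i; obtain ⟨hy0, hy1⟩ := hy i
    constructor
    · show 0 ≤ x i + δ * (1 - x i) * y i
      nlinarith [mul_nonneg (mul_nonneg hδ0.le (by linarith : (0:ℝ) ≤ 1 - x i)) hy0]
    · show x i + δ * (1 - x i) * y i ≤ 1
      nlinarith [mul_nonneg (mul_nonneg hδ0.le (by linarith : (0:ℝ) ≤ 1 - x i))
          (by linarith : (0:ℝ) ≤ 1 - y i),
        mul_nonneg (by linarith : (0:ℝ) ≤ 1 - δ) (by linarith : (0:ℝ) ≤ 1 - x i)]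
  have hd : ∀ i, |x' i - x i| ≤ δ := by
    intro i
    obtain ⟨h0, h1⟩ := hyb01 i
    have he : x' i - x i = δ * ((1 - x i) * y i) := by
      show x i + δ * (1 - x i) * y i - x i = _; ring
    rw [he, abs_of_nonneg (mul_nonneg hδ0.le h0)]
    nlinarith
  have hmain := hybrid_step hf0 hfmax hx hx' hδ0.le hd Finset.univ
  have huniv : (fun i => if i ∈ (Finset.univ : Finset (Fin n)) then x' i else x i) = x' := by
    funext i; simp
  rw [huniv, Finset.card_univ, Fintype.card_fin] at hmain
  have hsum : ∑ j : Fin n, (x' j - x j) * mlextDeriv n f x j =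
      δ * ∑ i : Fin n, mlextDeriv n f x i * (1 - x i) * y i := by
    rw [Finset.mul_sum]
    apply Finset.sum_congr rfl
    intro i _
    show (x i + δ * (1 - x i) * y i - x i) * _ = _
    ring
  rw [hsum] at hmain
  -- derivative approximation
  have hDa : ∀ i : Fin n, |mlextDeriv n fh x i - mlextDeriv n f x i| ≤ 2 * ε := by
    intro i
    have hI1 := update_mem_Icc hx (Set.mem_Icc.mpr ⟨zero_le_one, le_refl (1:ℝ)⟩) i
    have hI0 := update_mem_Icc hx (Set.mem_Icc.mpr ⟨le_refl (0:ℝ), zero_le_one⟩) i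
    have key : ∀ z : Fin n → ℝ, (∀ i, z i ∈ Set.Icc (0:ℝ) 1) →
        |mlext n fh z - mlext n f z| ≤ ε := by
      intro z hz
      rw [← mlext_sub]
      exact abs_le.mpr ⟨le_mlext (fun S => (abs_le.mp (happrox S)).1) hz,
        mlext_le (fun S => (abs_le.mp (happrox S)).2) hz⟩
    obtain ⟨a1, a2⟩ := abs_le.mp (key _ hI1)
    obtain ⟨b1, b2⟩ := abs_le.mp (key _ hI0)
    unfold mlextDeriv
    exact abs_le.mpr ⟨by linarith, by linarith⟩
  -- chain 1
  have hc1 : ∑ i : Fin n, mlextDeriv n f x i * (1 - x i) * y i ≥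
      ∑ i : Fin n, mlextDeriv n fh x i * (1 - x i) * y i - 2 * (n:ℝ) * ε := by
    have hper : ∀ i ∈ Finset.univ, mlextDeriv n fh x i * (1 - x i) * y i -
        mlextDeriv n f x i * (1 - x i) * y i ≤ 2 * ε := by
      intro i _
      obtain ⟨h0, h1⟩ := hyb01 i
      have h2 : (mlextDeriv n fh x i - mlextDeriv n f x i) * ((1 - x i) * y i) ≤
          |mlextDeriv n fh x i - mlextDeriv n f x i| * ((1 - x i) * y i) :=
        mul_le_mul_of_nonneg_right (le_abs_self _) h0
      have h3 : |mlextDeriv n fh x i - mlextDeriv n f x i| * ((1 - x i) * y i) ≤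
          (2 * ε) * 1 := mul_le_mul (hDa i) h1 h0 (by linarith)
      nlinarith [h2, h3]
    have hS := Finset.sum_le_sum hper
    rw [Finset.sum_sub_distrib] at hS
    simp only [Finset.sum_const, Finset.card_univ, Fintype.card_fin, nsmul_eq_mul] at hS
    linarith
  -- chain 2
  have hc2 : ∑ i ∈ O, mlextDeriv n f x i * (1 - x i) ≤
      ∑ i ∈ O, mlextDeriv n fh x i * (1 - x i) + 2 * (n:ℝ) * ε := by
    have hper : ∀ i ∈ O, mlextDeriv n f x i * (1 - x i) -
        mlextDeriv n fh x i * (1 - x i) ≤ 2 * ε := by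
      intro i _
      obtain ⟨hx0, hx1⟩ := hx i
      have h2 : (mlextDeriv n f x i - mlextDeriv n fh x i) * (1 - x i) ≤
          |mlextDeriv n f x i - mlextDeriv n fh x i| * (1 - x i) :=
        mul_le_mul_of_nonneg_right (le_abs_self _) (by linarith)
      have habs : |mlextDeriv n f x i - mlextDeriv n fh x i| ≤ 2 * ε := by
        rw [abs_sub_comm]; exact hDa i
      have h3 : |mlextDeriv n f x i - mlextDeriv n fh x i| * (1 - x i) ≤ (2 * ε) * 1 :=
        mul_le_mul habs (by linarith) (by linarith) (by linarith)
      nlinarith [h2, h3]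
    have hS := Finset.sum_le_sum hper
    rw [Finset.sum_sub_distrib] at hS
    simp only [Finset.sum_const, nsmul_eq_mul] at hS
    have hcard : (O.card : ℝ) ≤ (n : ℝ) := by
      have h : O.card ≤ n := by simpa using Finset.card_le_univ O
      exact_mod_cast h
    nlinarith [hS, hcard, hε]
  -- gradient dominance
  have hg := grad_dominates hf hx O
  have hreord : ∑ i ∈ O, (1 - x i) * mlextDeriv n f x i =
      ∑ i ∈ O, mlextDeriv n f x i * (1 - x i) :=
    Finset.sum_congr rfl fun i _ => mul_comm _ _
  rw [hreord] at hg
  -- assemble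
  set Δ := mlext n f (fun j => if j ∈ O then 1 else x j) - mlext n f x with hΔ
  have hSf : ∑ i : Fin n, mlextDeriv n f x i * (1 - x i) * y i ≥ Δ - 4 * (n:ℝ) * ε := by
    linarith [hc1, hchoice, hc2, hg]
  have hmul := mul_le_mul_of_nonneg_left hSf hδ0.le
  have hn3 : (n:ℝ) * ((n:ℝ) - 1) ≤ (n:ℝ) ^ 3 := by
    nlinarith [Nat.cast_nonneg (α := ℝ) n, sq_nonneg ((n:ℝ) - 1), sq_nonneg (n:ℝ)]
  have herr : fmax * δ ^ 2 * (n:ℝ) * ((n:ℝ) - 1) ≤ (n:ℝ) ^ 3 * δ ^ 2 * fmax := by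
    nlinarith [mul_nonneg hfm (sq_nonneg δ), hn3]
  nlinarith [hmain, hmul, herr]
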